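/- Any infinitesimally conical vector field action of the quaternions on a hyperkaehler manifold necessarily has weight k = 2. Precisely: if η, θ1, θ2, θ3 are vector fields with θa = Ja η, L_η ωa = k·ωa, and L_{θa} ωb = -2ε_{abc} ωc for distinct a,b,c, and if the hyperkaehler compatibility ωc(u,v) = ωa(Jb u, v)ε_{abc} holds, then k = 2. -/

import Mathlib

/-- The signature `ε_{abc}` for indices in `Fin 3` (as a real number). -/
noncomputable def eps (a b c : Fin 3) : ℝ :=
  if a = b ∨ b = c ∨ a = c then 0 else if b = a + 1 then 1 else -1

/-- Any infinitesimally conical vector field action of `ℍ` on a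
hyperkaehler manifold necessarily has weight `k = 2`.  Here the manifold is modelled
by a family, indexed by points `x : X`, of tangent data: a metric `g`, almost complex
structures `J a`, and Kaehler 2-forms `ω a` with `ω a (u,v) = g (Ja u, v)` and the
hyperkaehler compatibility `ω c (u,v) = ε_{abc} ω a (Jb u, v)`.  The vector fields
satisfy `θ a = J a η`, `L_η ω a = k • ω a` and `L_{θa} ω b = -2 ε_{abc} • ω c`, where
the Lie derivative of the closed forms `ω a` is given by Cartan's formula
`L_ξ ω a = d (ξ ⌟ ω a)`. -/
theorem stmt3 {X V : Type*} [AddCommGroup V] [Module ℝ V]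
    (g : X → V →ₗ[ℝ] V →ₗ[ℝ] ℝ)
    (J : Fin 3 → X → V →ₗ[ℝ] V)
    (ω : Fin 3 → X → V →ₗ[ℝ] V →ₗ[ℝ] ℝ)
    (hg : ∀ a x u v, ω a x u v = g x (J a x u) v)
    (hcompat : ∀ a b c, eps a b c ≠ 0 → ∀ x u v,
      ω c x u v = eps a b c * ω a x (J b x u) v)
    (η : X → V) (θ : Fin 3 → X → V)
    (hθ : ∀ a x, θ a x = J a x (η x))
    (d : (X → V →ₗ[ℝ] ℝ) →ₗ[ℝ] (X → V →ₗ[ℝ] V →ₗ[ℝ] ℝ))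
    (L : (X → V) → (X → V →ₗ[ℝ] V →ₗ[ℝ] ℝ) → (X → V →ₗ[ℝ] V →ₗ[ℝ] ℝ))
    (cartan : ∀ (ξ : X → V) (a : Fin 3), L ξ (ω a) = d (fun x => ω a x (ξ x)))
    (k : ℝ)
    (hLη : ∀ a, L η (ω a) = k • ω a)
    (hLθ : ∀ a b c, eps a b c ≠ 0 → L (θ a) (ω b) = (-2 * eps a b c) • ω c)
    (hnz : ∀ a, ω a ≠ 0) :
    k = 2 := by
  have e012 : eps 0 1 2 = 1 := by norm_num [eps, Fin.ext_iff]
  have e102 : eps 1 0 2 = -1 := by norm_num [eps, Fin.ext_iff] <;> decide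
  -- interior product identity: ω 1 ⌟ θ 0 = -(ω 2 ⌟ η)
  have hfun : (fun x => ω 1 x (θ 0 x)) = (-1 : ℝ) • (fun x => ω 2 x (η x)) := by
    funext x
    ext v
    have h := hcompat 1 0 2 (by rw [e102]; norm_num) x (η x) v
    rw [e102] at h
    simp only [hθ, Pi.smul_apply, LinearMap.smul_apply, smul_eq_mul]
    linarith [h]
  have h1 : L (θ 0) (ω 1) = (-2 * eps 0 1 2) • ω 2 := hLθ 0 1 2 (by rw [e012]; norm_num)
  rw [cartan, hfun, map_smul, ← cartan, hLη, e012, smul_smul] at h1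
  have h3 : (-1 : ℝ) * k = -2 * 1 := smul_left_injective ℝ (M := X → V →ₗ[ℝ] V →ₗ[ℝ] ℝ) (hnz 2) h1
  linarith
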